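/- Let G be the group ⟨a, b | aba = bab⟩ (the braid group on 3 strands) and let N be the normal closure of (ab)⁶. Then the quotient G/N has abelianization Z/12, and the image of a in (G/N)^{ab} generates it. -/

import Mathlib

/-- The braid group on 3 strands, `B₃ = ⟨a, b | aba = bab⟩`. -/
def braidRels : Set (FreeGroup (Fin 2)) :=
  { FreeGroup.of 0 * FreeGroup.of 1 * FreeGroup.of 0 *
      (FreeGroup.of 1 * FreeGroup.of 0 * FreeGroup.of 1)⁻¹ }

/-- The normal closure of `(ab)⁶` in `B₃`. -/
def centerPow : Subgroup (PresentedGroup braidRels) :=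
  Subgroup.normalClosure
    {(PresentedGroup.of (rels := braidRels) 0 *
       PresentedGroup.of (rels := braidRels) 1) ^ 6}

instance : centerPow.Normal := Subgroup.normalClosure_normal

namespace Stmt15Aux

abbrev Q : Type := PresentedGroup braidRels ⧸ centerPow
abbrev A : Type := Abelianization Q

/-- the projection `B₃ → A`. -/
def ρ : PresentedGroup braidRels →* A :=
  (Abelianization.of).comp (QuotientGroup.mk' centerPow)

def x : A := ρ (PresentedGroup.of 0)
def y : A := ρ (PresentedGroup.of 1)

lemma braid_rel :
    PresentedGroup.of (rels := braidRels) 0 * PresentedGroup.of 1 * PresentedGroup.of 0 =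
      PresentedGroup.of 1 * PresentedGroup.of 0 * PresentedGroup.of 1 := by
  have h : PresentedGroup.mk braidRels
      (FreeGroup.of 0 * FreeGroup.of 1 * FreeGroup.of 0 *
        (FreeGroup.of 1 * FreeGroup.of 0 * FreeGroup.of 1)⁻¹) = 1 :=
    (QuotientGroup.eq_one_iff _).mpr (Subgroup.subset_normalClosure rfl)
  simp only [map_mul, map_inv] at h
  exact mul_inv_eq_one.mp h

lemma y_eq_x : y = x := by
  have h' : x * y * x = y * x * y := by
    have h := congrArg ρ braid_rel
    simpa only [map_mul, x, y] using h
  have h2 : x * (x * y) = x * (y * y) := by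
    calc x * (x * y) = x * y * x := mul_comm x (x * y)
    _ = y * x * y := h'
    _ = x * (y * y) := by rw [mul_comm y x, mul_assoc]
  have h3 : x * y = y * y := mul_left_cancel h2
  have h4 : x = y := mul_right_cancel h3
  exact h4.symm

lemma x_pow_twelve : x ^ 12 = 1 := by
  have hmem : (PresentedGroup.of (rels := braidRels) 0 *
      PresentedGroup.of (rels := braidRels) 1) ^ 6 ∈ centerPow :=
    Subgroup.subset_normalClosure rfl
  have h1 : (QuotientGroup.mk' centerPow) ((PresentedGroup.of (rels := braidRels) 0 *
      PresentedGroup.of (rels := braidRels) 1) ^ 6) = 1 := by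
    rw [QuotientGroup.mk'_apply, QuotientGroup.eq_one_iff]; exact hmem
  have h : ρ ((PresentedGroup.of (rels := braidRels) 0 *
      PresentedGroup.of (rels := braidRels) 1) ^ 6) = 1 := by
    rw [ρ, MonoidHom.comp_apply, h1, map_one]
  rw [map_pow, map_mul] at h
  have hx : (x * y) ^ 6 = 1 := h
  rw [y_eq_x] at hx
  calc x ^ 12 = (x * x) ^ 6 := by rw [mul_pow, ← pow_add]
  _ = 1 := hx

/-- The map `B₃ → Multiplicative (ZMod 12)` sending both generators to `1`. -/
def g₀ : PresentedGroup braidRels →* Multiplicative (ZMod 12) :=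
  PresentedGroup.toGroup (f := fun _ => Multiplicative.ofAdd (1 : ZMod 12)) (by
    intro r hr
    rw [braidRels, Set.mem_singleton_iff] at hr
    subst hr
    simp only [map_mul, map_inv, FreeGroup.lift_apply_of]
    group)

lemma hker : ∀ z ∈ centerPow, g₀ z = 1 := by
  have key : g₀ ((PresentedGroup.of (rels := braidRels) 0 *
      PresentedGroup.of (rels := braidRels) 1) ^ 6) = 1 := by
    rw [map_pow, map_mul]
    rw [show g₀ (PresentedGroup.of 0) = Multiplicative.ofAdd (1 : ZMod 12) from
      PresentedGroup.toGroup.of _]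
    rw [show g₀ (PresentedGroup.of 1) = Multiplicative.ofAdd (1 : ZMod 12) from
      PresentedGroup.toGroup.of _]
    decide
  intro z hz
  refine Subgroup.normalClosure_le_normal (N := g₀.ker) ?_ hz
  intro w hw
  rw [Set.mem_singleton_iff] at hw
  subst hw
  exact key

def g₁ : Q →* Multiplicative (ZMod 12) :=
  QuotientGroup.lift centerPow g₀ hker

def φ : A →* Multiplicative (ZMod 12) := Abelianization.lift g₁

lemma φ_x : φ x = Multiplicative.ofAdd (1 : ZMod 12) := by
  show g₁ (QuotientGroup.mk' centerPow (PresentedGroup.of 0)) = _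
  show g₀ (PresentedGroup.of 0) = _
  exact PresentedGroup.toGroup.of _

lemma smul_zero' : (12 : ℤ) • Additive.ofMul x = 0 := by
  have : x ^ (12 : ℤ) = 1 := by rw [zpow_ofNat]; exact x_pow_twelve
  exact congrArg Additive.ofMul this

def ψ : Multiplicative (ZMod 12) →* A :=
  AddMonoidHom.toMultiplicativeLeft
    (ZMod.lift 12 ⟨zmultiplesHom (Additive A) (Additive.ofMul x), by
      simpa using smul_zero'⟩)

lemma ψ_one : ψ (Multiplicative.ofAdd (1 : ZMod 12)) = x := by
  have h1 : ((1 : ℤ) : ZMod 12) = (1 : ZMod 12) := by norm_num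
  show Additive.toMul ((ZMod.lift 12 ⟨zmultiplesHom (Additive A) (Additive.ofMul x), by
      simpa using smul_zero'⟩) (1 : ZMod 12)) = x
  rw [← h1, ZMod.lift_coe]
  simp

lemma zpowers_x_top : Subgroup.zpowers x = ⊤ := by
  rw [Subgroup.eq_top_iff']
  intro a
  obtain ⟨q, rfl⟩ : ∃ q : Q, Abelianization.of q = a :=
    Quotient.inductionOn' a fun q => ⟨q, rfl⟩
  obtain ⟨p, rfl⟩ := QuotientGroup.mk'_surjective centerPow q
  have : p ∈ (Subgroup.zpowers x).comap ρ := by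
    refine PresentedGroup.generated_by _ _ (fun j => ?_) p
    fin_cases j
    · exact Subgroup.mem_zpowers x
    · show y ∈ Subgroup.zpowers x
      rw [y_eq_x]; exact Subgroup.mem_zpowers x
  exact this

noncomputable def e : A ≃* Multiplicative (ZMod 12) where
  toFun := φ
  invFun := ψ
  left_inv := by
    intro a
    have ha : a ∈ Subgroup.zpowers x := zpowers_x_top ▸ Subgroup.mem_top a
    obtain ⟨n, rfl⟩ := ha
    rw [map_zpow, φ_x, map_zpow, ψ_one]
  right_inv := by
    intro m
    have hm : m = (Multiplicative.ofAdd (1 : ZMod 12)) ^ (m.toAdd.val) := by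
      rw [← ofAdd_nsmul]
      simp [nsmul_eq_mul, ZMod.natCast_val, ZMod.cast_id]
    rw [hm, map_pow, ψ_one, map_pow, φ_x]
  map_mul' := map_mul φ

end Stmt15Aux

/-- `B₃ / ⟨⟨(ab)⁶⟩⟩` has abelianization `ℤ/12`, generated by the image
of `a`. -/
theorem stmt15 :
    Nonempty (Abelianization (PresentedGroup braidRels ⧸ centerPow) ≃*
        Multiplicative (ZMod 12)) ∧
      Subgroup.zpowers
        (Abelianization.of
          (QuotientGroup.mk' centerPow
            (PresentedGroup.of (rels := braidRels) 0))) = ⊤ := by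
  exact ⟨⟨Stmt15Aux.e⟩, Stmt15Aux.zpowers_x_top⟩
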